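/- If f is a {g,h}-derivation on an algebra A (i.e., f, g, h are linear maps with f(ab) = g(a)b + a h(b) = h(a)b + a g(b) for all a, b in A), then for every non-negative integer n and all a, b in A, the Leibniz-type rule holds: f^n(ab) = \sum_{k=0}^{n} \binom{n}{k} g^{n-k}(a) h^{k}(b) = \sum_{k=0}^{n} \binom{n}{k} h^{n-k}(a) g^{k}(b), where f^0 = g^0 = h^0 is the identity map. -/

import Mathlib

lemma leibniz_aux {K A : Type*} [Field K] [Ring A] [Algebra K A]
    (f g h : Module.End K A)
    (H1 : ∀ a b : A, f (a * b) = g a * b + a * h b) :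
    ∀ (n : ℕ) (a b : A),
      (f ^ n) (a * b) =
        ∑ k ∈ Finset.range (n + 1), (n.choose k) • ((g ^ (n - k)) a * (h ^ k) b) := by
  intro n
  induction n with
  | zero => intro a b; simp
  | succ n ih =>
    intro a b
    have e1 : (f ^ (n + 1)) (a * b) = f ((f ^ n) (a * b)) := by
      rw [pow_succ', Module.End.mul_apply]
    rw [e1, ih, map_sum]
    have step : ∀ k ∈ Finset.range (n + 1),
        f ((n.choose k) • ((g ^ (n - k)) a * (h ^ k) b)) =
          (n.choose k) • ((g ^ (n - k + 1)) a * (h ^ k) b)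
            + (n.choose k) • ((g ^ (n - k)) a * (h ^ (k + 1)) b) := by
      intro k _
      rw [map_nsmul, H1, smul_add, pow_succ' g, Module.End.mul_apply,
        pow_succ' h, Module.End.mul_apply]
    rw [Finset.sum_congr rfl step, Finset.sum_add_distrib]
    have eq1 : ∑ k ∈ Finset.range (n + 1),
        (n.choose k) • ((g ^ (n - k + 1)) a * (h ^ k) b)
        = (∑ k ∈ Finset.range n,
            (n.choose (k + 1)) • ((g ^ (n - k)) a * (h ^ (k + 1)) b))
          + (g ^ (n + 1)) a * b := by
      rw [Finset.sum_range_succ']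
      simp only [Nat.sub_zero, pow_zero, Module.End.one_apply, one_smul,
        Nat.choose_zero_right]
      congr 1
      refine Finset.sum_congr rfl fun k hk => ?_
      rw [Finset.mem_range] at hk
      have e : n - (k + 1) + 1 = n - k := by omega
      rw [e]
    rw [eq1]
    have eq2 : ∑ k ∈ Finset.range n,
        (n.choose (k + 1)) • ((g ^ (n - k)) a * (h ^ (k + 1)) b)
        = ∑ k ∈ Finset.range (n + 1),
            (n.choose (k + 1)) • ((g ^ (n - k)) a * (h ^ (k + 1)) b) := by
      rw [Finset.sum_range_succ, Nat.choose_succ_self, zero_smul, add_zero]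
    rw [eq2]
    rw [Finset.sum_range_succ' (fun k => ((n + 1).choose k) •
      ((g ^ (n + 1 - k)) a * (h ^ k) b))]
    simp only [Nat.sub_zero, pow_zero, Module.End.one_apply, one_smul,
      Nat.choose_zero_right]
    rw [add_right_comm]
    congr 1
    rw [← Finset.sum_add_distrib]
    refine Finset.sum_congr rfl fun k hk => ?_
    rw [Finset.mem_range] at hk
    have e : n + 1 - (k + 1) = n - k := by omega
    rw [e, Nat.choose_succ_succ, add_smul, add_comm]

/-- Leibniz rule for powers of a `{g,h}`-derivation. -/
theorem leibniz_rule_pow_ghDerivation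
    {K A : Type*} [Field K] [CharZero K] [Ring A] [Algebra K A]
    (f g h : Module.End K A)
    (hgh : ∀ a b : A, f (a * b) = g a * b + a * h b ∧ f (a * b) = h a * b + a * g b) :
    ∀ (n : ℕ) (a b : A),
      (f ^ n) (a * b) =
        ∑ k ∈ Finset.range (n + 1), (n.choose k) • ((g ^ (n - k)) a * (h ^ k) b) ∧
      (f ^ n) (a * b) =
        ∑ k ∈ Finset.range (n + 1), (n.choose k) • ((h ^ (n - k)) a * (g ^ k) b) := by
  intro n a b
  exact ⟨leibniz_aux f g h (fun a b => (hgh a b).1) n a b,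
         leibniz_aux f h g (fun a b => (hgh a b).2) n a b⟩
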